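/- Let E be a field of characteristic zero with a derivation δ (write a' := δ(a)), and extend δ to E[[x]] coefficientwise: δ(Σ c_i x^i) = Σ δ(c_i) x^i. Let a ∈ E with a' ≠ 0 and let m ∈ ℤ_{≥0}. Then the m+1 power series δ^r(e^{ax}) for 0 ≤ r ≤ m, where e^{ax} := Σ_{n≥0} a^n x^n / n! ∈ E[[x]], are linearly independent over E. -/

import Mathlib

/-- The exponential power series `e^{ax} = Σ_{n ≥ 0} aⁿ xⁿ / n!` in `E⟦X⟧`
(for `E` of characteristic zero). -/
noncomputable def expSeries' {E : Type*} [Field E] [CharZero E] (a : E) : PowerSeries E :=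
  PowerSeries.mk fun n => a ^ n / (n.factorial : E)

/-- The coefficientwise extension of a map `d : E → E` to `E⟦X⟧`:
`δ(Σ cᵢ xⁱ) = Σ δ(cᵢ) xⁱ`. -/
noncomputable def coeffWiseMap {E : Type*} [Field E] (d : E → E) (f : PowerSeries E) :
    PowerSeries E :=
  PowerSeries.mk fun n => d (PowerSeries.coeff n f)

set_option linter.unusedSectionVars false


open Polynomial

section Aux
variable {E : Type*} [Field E] [CharZero E] (δ : E → E)

/-- coefficientwise map on polynomials -/
noncomputable def dmapPoly (p : Polynomial E) : Polynomial E :=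
  ∑ i ∈ p.support, Polynomial.C (δ (p.coeff i)) * Polynomial.X ^ i

noncomputable def Bpoly (u : E) : ℕ → Polynomial E
  | 0 => 1
  | r + 1 => Polynomial.C u * Polynomial.X * Bpoly u r + dmapPoly δ (Bpoly u r)

variable (hadd : ∀ x y : E, δ (x + y) = δ x + δ y)
  (hleib : ∀ x y : E, δ (x * y) = δ x * y + x * δ y)

include hadd in
lemma delta_zero : δ 0 = 0 := by
  have h := hadd 0 0
  simp only [add_zero] at h
  exact (left_eq_add.mp h)

include hleib in
lemma delta_one : δ 1 = 0 := by
  have h := hleib 1 1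
  simp only [mul_one, one_mul] at h
  exact (left_eq_add.mp h)

include hadd hleib in
lemma delta_nat (n : ℕ) : δ (n : E) = 0 := by
  induction n with
  | zero => exact_mod_cast delta_zero δ hadd
  | succ k ih =>
    push_cast
    rw [hadd, ih, delta_one δ hleib, add_zero]

include hleib in
lemma delta_pow_zero {c : E} (hc : δ c = 0) (i : ℕ) : δ (c ^ i) = 0 := by
  induction i with
  | zero => simpa using delta_one δ hleib
  | succ k ih => rw [pow_succ, hleib, ih, hc, zero_mul, mul_zero, add_zero]

include hadd in
lemma delta_sum {ι : Type*} (s : Finset ι) (f : ι → E) :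
    δ (∑ i ∈ s, f i) = ∑ i ∈ s, δ (f i) := by
  classical
  induction s using Finset.induction with
  | empty => simpa using delta_zero δ hadd
  | insert _ _ h ih => rw [Finset.sum_insert h, Finset.sum_insert h, hadd, ih]

include hadd in
lemma coeff_dmapPoly (p : Polynomial E) (k : ℕ) :
    (dmapPoly δ p).coeff k = δ (p.coeff k) := by
  classical
  rw [dmapPoly, Polynomial.finset_sum_coeff]
  simp only [Polynomial.coeff_C_mul, Polynomial.coeff_X_pow]
  by_cases hk : k ∈ p.support
  · rw [Finset.sum_eq_single k]
    · simp
    · intro b _ hb; simp [Ne.symm hb]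
    · intro h; exact absurd hk h
  · rw [Finset.sum_eq_zero]
    · rw [Polynomial.notMem_support_iff.mp hk, delta_zero δ hadd]
    · intro b hb
      have : k ≠ b := fun h => hk (h ▸ hb)
      simp [this]

include hadd hleib in
lemma delta_eval {c : E} (hc : δ c = 0) (p : Polynomial E) :
    δ (p.eval c) = (dmapPoly δ p).eval c := by
  classical
  rw [Polynomial.eval_eq_sum, Polynomial.sum_def, delta_sum δ hadd, dmapPoly]
  rw [Polynomial.eval_finset_sum]
  apply Finset.sum_congr rfl
  intro i _
  rw [hleib, delta_pow_zero δ hleib hc, mul_zero, add_zero]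
  simp

end Aux

section Aux2
variable {E : Type*} [Field E] [CharZero E] (δ : E → E)
  (hadd : ∀ x y : E, δ (x + y) = δ x + δ y)
  (hleib : ∀ x y : E, δ (x * y) = δ x * y + x * δ y)

include hadd hleib in
lemma Bpoly_coeff_zero (u : E) : ∀ r k : ℕ, r < k → (Bpoly δ u r).coeff k = 0 := by
  intro r
  induction r with
  | zero => intro k hk; simp only [Bpoly, Polynomial.coeff_one, if_neg (by omega : ¬ k = 0)]
  | succ r ih =>
    intro k hk
    obtain ⟨j, rfl⟩ : ∃ j, k = j + 1 := ⟨k - 1, by omega⟩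
    rw [Bpoly, Polynomial.coeff_add, coeff_dmapPoly δ hadd,
      ih _ (by omega), delta_zero δ hadd, add_zero, mul_assoc,
      Polynomial.coeff_C_mul, Polynomial.coeff_X_mul, ih _ (by omega), mul_zero]

include hadd hleib in
lemma Bpoly_coeff_top (u : E) : ∀ r : ℕ, (Bpoly δ u r).coeff r = u ^ r := by
  intro r
  induction r with
  | zero => simp [Bpoly]
  | succ r ih =>
    rw [Bpoly, Polynomial.coeff_add, coeff_dmapPoly δ hadd,
      Bpoly_coeff_zero δ hadd hleib u r (r+1) (by omega), delta_zero δ hadd, add_zero,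
      mul_assoc, Polynomial.coeff_C_mul, Polynomial.coeff_X_mul, ih, pow_succ, mul_comm]

variable (a : E) (ha0 : a ≠ 0)

include hleib ha0 in
lemma delta_pow (n : ℕ) : δ (a ^ n) = a ^ n * (n * (δ a / a)) := by
  induction n with
  | zero => simpa using delta_one δ hleib
  | succ k ih =>
    rw [pow_succ, hleib, ih]
    field_simp
    push_cast
    ring

include hadd hleib ha0 in
lemma delta_iter_pow (u : E) (hu : u = δ a / a) :
    ∀ (r n : ℕ), δ^[r] (a ^ n) = a ^ n * (Bpoly δ u r).eval (n : E) := by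
  intro r
  induction r with
  | zero => intro n; simp [Bpoly]
  | succ r ih =>
    intro n
    rw [Function.iterate_succ_apply', ih n, hleib, delta_pow δ hleib a ha0,
      delta_eval δ hadd hleib (delta_nat δ hadd hleib n)]
    rw [Bpoly]
    simp only [Polynomial.eval_add, Polynomial.eval_mul, Polynomial.eval_C, Polynomial.eval_X]
    rw [hu]
    ring

include hadd hleib in
lemma delta_iter_div (r : ℕ) (y : E) (q : ℕ) (hq : (q : E) ≠ 0) :
    δ^[r] (y / q) = δ^[r] y / q := by
  induction r generalizing y with
  | zero => simp
  | succ r ih =>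
    rw [Function.iterate_succ_apply, Function.iterate_succ_apply]
    rw [show y / q = (q : E)⁻¹ * y by rw [div_eq_inv_mul]]
    have h1 : δ ((q : E)⁻¹ * y) = (q : E)⁻¹ * δ y := by
      have h2 : δ ((q : E) * ((q : E)⁻¹ * y)) = (q : E) * δ ((q : E)⁻¹ * y) := by
        rw [hleib, delta_nat δ hadd hleib q, zero_mul, zero_add]
      rw [show (q : E) * ((q : E)⁻¹ * y) = y by field_simp] at h2
      rw [h2, ← mul_assoc, inv_mul_cancel₀ hq, one_mul]
    rw [h1, show (q : E)⁻¹ * δ y = δ y / q by rw [div_eq_inv_mul]]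
    exact ih (δ y)

end Aux2

/-- Let `E` be a differential field of characteristic zero with derivation `δ`, extended
coefficientwise to `E⟦X⟧`.  If `a ∈ E` satisfies `δ a ≠ 0`, then for every `m` the power
series `δ^r(e^{ax})`, `0 ≤ r ≤ m`, are linearly independent over `E`. -/
theorem derivatives_of_exp_linearIndependent
    {E : Type*} [Field E] [CharZero E]
    (δ : E → E)
    (hadd : ∀ x y : E, δ (x + y) = δ x + δ y)
    (hleib : ∀ x y : E, δ (x * y) = δ x * y + x * δ y)
    (a : E) (ha : δ a ≠ 0) (m : ℕ) :
    LinearIndependent E (fun r : Fin (m + 1) => (coeffWiseMap δ)^[(r : ℕ)] (expSeries' a)) := by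
  classical
  rw [Fintype.linearIndependent_iff]
  intro g hg
  have ha0 : a ≠ 0 := fun h => ha (h ▸ delta_zero δ hadd)
  set u : E := δ a / a with hu
  have hune : u ≠ 0 := div_ne_zero ha ha0
  have hcoeff_iter : ∀ (r n : ℕ) (f : PowerSeries E),
      PowerSeries.coeff n ((coeffWiseMap δ)^[r] f) = δ^[r] (PowerSeries.coeff n f) := by
    intro r
    induction r with
    | zero => simp
    | succ r ih =>
      intro n f
      rw [Function.iterate_succ_apply', Function.iterate_succ_apply',
        show PowerSeries.coeff n (coeffWiseMap δ ((coeffWiseMap δ)^[r] f)) =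
          δ (PowerSeries.coeff n ((coeffWiseMap δ)^[r] f)) by simp [coeffWiseMap], ih]
  set P : Polynomial E := ∑ r : Fin (m+1), Polynomial.C (g r) * Bpoly δ u (r : ℕ) with hP
  have hev : ∀ n : ℕ, P.eval (n : E) = 0 := by
    intro n
    have hfac : (n.factorial : E) ≠ 0 := by exact_mod_cast Nat.factorial_ne_zero n
    have h1 := congrArg (PowerSeries.coeff n) hg
    simp only [map_sum, map_smul, smul_eq_mul, map_zero] at h1
    have h2 : ∀ r : Fin (m+1), PowerSeries.coeff n ((coeffWiseMap δ)^[(r:ℕ)] (expSeries' a))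
        = a ^ n * (Bpoly δ u (r:ℕ)).eval (n : E) / n.factorial := by
      intro r
      rw [hcoeff_iter,
        show PowerSeries.coeff n (expSeries' a) = a ^ n / n.factorial by simp [expSeries'],
        delta_iter_div δ hadd hleib _ _ _ hfac,
        delta_iter_pow δ hadd hleib a ha0 u hu]
    simp only [h2] at h1
    have h3 : (a ^ n / n.factorial) *
        ∑ r : Fin (m+1), g r * (Bpoly δ u (r:ℕ)).eval (n:E) = 0 := by
      rw [Finset.mul_sum, ← h1]
      apply Finset.sum_congr rfl
      intro r _
      ring
    have h4 : ∑ r : Fin (m+1), g r * (Bpoly δ u (r:ℕ)).eval (n:E) = 0 := by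
      rcases mul_eq_zero.mp h3 with h | h
      · exact absurd h (div_ne_zero (pow_ne_zero _ ha0) hfac)
      · exact h
    rw [hP, Polynomial.eval_finset_sum]
    simp only [Polynomial.eval_mul, Polynomial.eval_C]
    exact h4
  have hPzero : P = 0 := by
    apply Polynomial.eq_zero_of_infinite_isRoot
    apply Set.infinite_of_injective_forall_mem (f := fun n : ℕ => (n : E))
      (Nat.cast_injective)
    intro n
    exact hev n
  intro r
  by_contra hgr
  set S : Finset (Fin (m+1)) := Finset.univ.filter (fun s => g s ≠ 0) with hS
  have hSne : S.Nonempty := ⟨r, by simp [hS, hgr]⟩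
  set r0 := S.max' hSne with hr0def
  have hr0 : g r0 ≠ 0 := (Finset.mem_filter.mp (S.max'_mem hSne)).2
  have hc : P.coeff (r0 : ℕ) = 0 := by rw [hPzero]; simp
  rw [hP, Polynomial.finset_sum_coeff] at hc
  simp only [Polynomial.coeff_C_mul] at hc
  rw [Finset.sum_eq_single r0] at hc
  · rw [Bpoly_coeff_top δ hadd hleib u] at hc
    rcases mul_eq_zero.mp hc with h | h
    · exact hr0 h
    · exact pow_ne_zero _ hune h
  · intro b _ hb
    rcases lt_or_gt_of_ne (fun h : (b:ℕ) = (r0:ℕ) => hb (Fin.ext h)) with hlt | hgt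
    · rw [Bpoly_coeff_zero δ hadd hleib u _ _ hlt, mul_zero]
    · have hb0 : b ∉ S := fun hbS =>
        absurd (S.le_max' b hbS) (not_le.mpr (by exact_mod_cast hgt))
      have : g b = 0 := by
        by_contra h
        exact hb0 (Finset.mem_filter.mpr ⟨Finset.mem_univ _, h⟩)
      rw [this, zero_mul]
  · intro h
    exact absurd (Finset.mem_univ r0) h
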